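/- Let 1 ≤ n' < n be integers and let u ∈ ℝ^{n'}. Define the upper-triangular unipotent matrix x† with ones on the diagonal, entries x†_{i,j} = −u_i u_j · ∏_{l=i}^{j−1} (1+u_l²)^{−1/2} for 1 ≤ i < j ≤ n', entries x†_{i,n} = u_i · ∏_{j=1}^{n'} (1+u_j²)^{−1/2} · ∏_{j=i}^{n'} (1+u_j²)^{−1/2} for 1 ≤ i ≤ n', and all other off-diagonal entries zero. Then the inverse of x† is the upper-triangular unipotent matrix with ones on the diagonal, entries (x†⁻¹)_{i,j} = u_i u_j (1+u_i²)^{−1/2} · ∏_{l=i+1}^{j−1} (1+u_l²)^{1/2} for 1 ≤ i < j ≤ n', entries (x†⁻¹)_{i,n} = −u_i (1+u_i²)^{−1} · ∏_{j=1}^{i−1} (1+u_j²)^{−1/2} for 1 ≤ i ≤ n', and all other off-diagonal entries zero. -/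

import Mathlib

open Finset

noncomputable def sqq (u : ℕ → ℝ) (l : ℕ) : ℝ := Real.sqrt (1 + u l ^ 2)
lemma sqq_pos (u : ℕ → ℝ) (l : ℕ) : 0 < sqq u l := Real.sqrt_pos.2 (by positivity)
lemma sqq_ne (u : ℕ → ℝ) (l : ℕ) : sqq u l ≠ 0 := (sqq_pos u l).ne'
lemma sqq_sq (u : ℕ → ℝ) (l : ℕ) : sqq u l ^ 2 = 1 + u l ^ 2 := Real.sq_sqrt (by positivity)
lemma sqq_diff (u : ℕ → ℝ) (l : ℕ) :
    sqq u l - (sqq u l)⁻¹ = u l ^ 2 * (sqq u l)⁻¹ := by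
  have h := sqq_sq u l; have hn := sqq_ne u l; field_simp; linear_combination h
lemma one_sub_inv_sqq (u : ℕ → ℝ) (l : ℕ) :
    1 - (sqq u l)⁻¹ * (sqq u l)⁻¹ = u l ^ 2 * ((sqq u l)⁻¹ * (sqq u l)⁻¹) := by
  have h := sqq_sq u l; have hn := sqq_ne u l; field_simp; linear_combination h
lemma inv_one_add_sq (u : ℕ → ℝ) (l : ℕ) :
    (1 + u l ^ 2)⁻¹ = (sqq u l)⁻¹ * (sqq u l)⁻¹ := by rw [← sqq_sq u l, pow_two, mul_inv]
lemma tele (f : ℕ → ℝ) {m k : ℕ} (h : m ≤ k) :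
    ∑ j ∈ Finset.Ico m k, (f j - f (j + 1)) = f m - f k := by
  rw [Finset.sum_Ico_eq_sum_range]
  have := Finset.sum_range_sub' (fun i => f (m + i)) (k - m)
  simpa [Nat.add_sub_cancel' h, add_assoc] using this
lemma prod_split (g : ℕ → ℝ) {c m d : ℕ} (h1 : c ≤ m + 1) (h2 : m ≤ d) :
    ∏ l ∈ Finset.Icc c d, g l
      = (∏ l ∈ Finset.Icc c m, g l) * ∏ l ∈ Finset.Icc (m + 1) d, g l := by
  rw [← Finset.prod_union (by
    rw [Finset.disjoint_left]; intro x hx hy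
    simp only [Finset.mem_Icc] at hx hy; omega)]
  apply Finset.prod_congr _ (fun _ _ => rfl)
  ext x; simp only [Finset.mem_Icc, Finset.mem_union]; omega

/-! telescoping functions -/

noncomputable def fa (u : ℕ → ℝ) (A B j : ℕ) : ℝ :=
  (∏ l ∈ Finset.Icc (A + 1) j, (sqq u l)⁻¹) * ∏ l ∈ Finset.Icc (j + 1) B, sqq u l

noncomputable def ga (u : ℕ → ℝ) (A j : ℕ) : ℝ :=
  (∏ l ∈ Finset.Icc (A + 1) j, (sqq u l)⁻¹) * ∏ l ∈ Finset.Icc 1 j, (sqq u l)⁻¹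

noncomputable def fc (u : ℕ → ℝ) (A B j : ℕ) : ℝ :=
  (∏ l ∈ Finset.Icc (A + 2) j, sqq u l) * ∏ l ∈ Finset.Icc (j + 1) B, (sqq u l)⁻¹

lemma fa_diff (u : ℕ → ℝ) (A B j : ℕ) (h1 : A ≤ j) (h2 : j < B) :
    fa u A B j - fa u A B (j + 1)
      = (∏ l ∈ Finset.Icc (A + 1) j, (sqq u l)⁻¹) * (∏ l ∈ Finset.Icc (j + 2) B, sqq u l)
          * (u (j + 1) ^ 2 * (sqq u (j + 1))⁻¹) := by
  unfold fa
  rw [prod_split (fun l => sqq u l) (show j + 1 ≤ j + 1 + 1 by omega) (show j + 1 ≤ B from h2),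
    prod_split (fun l => (sqq u l)⁻¹) (show A + 1 ≤ j + 1 by omega) (show j ≤ j + 1 by omega),
    Finset.Icc_self]
  simp only [Finset.prod_singleton]
  rw [← sqq_diff u (j + 1)]
  ring

lemma ga_diff (u : ℕ → ℝ) (A j : ℕ) (h1 : A ≤ j) :
    ga u A j - ga u A (j + 1)
      = (∏ l ∈ Finset.Icc (A + 1) j, (sqq u l)⁻¹) * (∏ l ∈ Finset.Icc 1 j, (sqq u l)⁻¹)
          * (u (j + 1) ^ 2 * ((sqq u (j + 1))⁻¹ * (sqq u (j + 1))⁻¹)) := by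
  unfold ga
  rw [prod_split (fun l => (sqq u l)⁻¹) (show A + 1 ≤ j + 1 by omega) (show j ≤ j + 1 by omega),
    prod_split (fun l => (sqq u l)⁻¹) (show 1 ≤ j + 1 by omega) (show j ≤ j + 1 by omega),
    Finset.Icc_self]
  simp only [Finset.prod_singleton]
  rw [← one_sub_inv_sqq u (j + 1)]
  ring

lemma fc_diff (u : ℕ → ℝ) (A B j : ℕ) (h1 : A < j) (h2 : j < B) :
    fc u A B j - fc u A B (j + 1)
      = -((∏ l ∈ Finset.Icc (A + 2) j, sqq u l) * (∏ l ∈ Finset.Icc (j + 2) B, (sqq u l)⁻¹)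
          * (u (j + 1) ^ 2 * (sqq u (j + 1))⁻¹)) := by
  unfold fc
  rw [prod_split (fun l => (sqq u l)⁻¹) (show j + 1 ≤ j + 1 + 1 by omega) (show j + 1 ≤ B from h2),
    prod_split (fun l => sqq u l) (show A + 2 ≤ j + 1 by omega) (show j ≤ j + 1 by omega),
    Finset.Icc_self]
  simp only [Finset.prod_singleton]
  rw [← sqq_diff u (j + 1)]
  ring

/-! the four key identities -/

lemma keyXY1 (u : ℕ → ℝ) {A B : ℕ} (hAB : A < B) :
    u (A + 1) * u (B + 1) * (sqq u (A + 1))⁻¹ * ∏ l ∈ Finset.Icc (A + 2) B, sqq u l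
      + (∑ j ∈ Finset.Ioo A B,
          (-(u (A + 1) * u (j + 1)) * ∏ l ∈ Finset.Icc (A + 1) j, (sqq u l)⁻¹)
            * (u (j + 1) * u (B + 1) * (sqq u (j + 1))⁻¹ * ∏ l ∈ Finset.Icc (j + 2) B, sqq u l))
      + -(u (A + 1) * u (B + 1)) * ∏ l ∈ Finset.Icc (A + 1) B, (sqq u l)⁻¹ = 0 := by
  have hsum : (∑ j ∈ Finset.Ioo A B,
      (-(u (A + 1) * u (j + 1)) * ∏ l ∈ Finset.Icc (A + 1) j, (sqq u l)⁻¹)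
        * (u (j + 1) * u (B + 1) * (sqq u (j + 1))⁻¹ * ∏ l ∈ Finset.Icc (j + 2) B, sqq u l))
      = -(u (A + 1) * u (B + 1)) * (fa u A B (A + 1) - fa u A B B) := by
    rw [← Finset.Ico_add_one_left_eq_Ioo]
    rw [show (∑ j ∈ Finset.Ico (A + 1) B,
        (-(u (A + 1) * u (j + 1)) * ∏ l ∈ Finset.Icc (A + 1) j, (sqq u l)⁻¹)
          * (u (j + 1) * u (B + 1) * (sqq u (j + 1))⁻¹ * ∏ l ∈ Finset.Icc (j + 2) B, sqq u l))
        = ∑ j ∈ Finset.Ico (A + 1) B, -(u (A + 1) * u (B + 1)) * (fa u A B j - fa u A B (j + 1))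
      from Finset.sum_congr rfl fun j hj => by
        rw [Finset.mem_Ico] at hj
        rw [fa_diff u A B j (by omega) (by omega)]
        ring]
    rw [← Finset.mul_sum, tele (fa u A B) hAB]
  rw [hsum]
  have e1 : fa u A B (A + 1) = (sqq u (A + 1))⁻¹ * ∏ l ∈ Finset.Icc (A + 2) B, sqq u l := by
    unfold fa
    rw [Finset.Icc_self, Finset.prod_singleton, show A + 1 + 1 = A + 2 from rfl]
  have e2 : fa u A B B = ∏ l ∈ Finset.Icc (A + 1) B, (sqq u l)⁻¹ := by
    unfold fa; rw [Finset.Icc_eq_empty (show ¬(B + 1 ≤ B) by omega), Finset.prod_empty, mul_one]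
  rw [e1, e2]
  ring

lemma keyXY2 (u : ℕ → ℝ) {A B n' : ℕ} (hA : A + 1 ≤ n') (hB : n' ≤ B) :
    -(u (A + 1)) * (1 + u (A + 1) ^ 2)⁻¹ * ∏ l ∈ Finset.Icc 1 A, (sqq u l)⁻¹
      + (∑ j ∈ Finset.Ioo A B,
          if j + 1 ≤ n' then
            (-(u (A + 1) * u (j + 1)) * ∏ l ∈ Finset.Icc (A + 1) j, (sqq u l)⁻¹)
              * (-(u (j + 1)) * (1 + u (j + 1) ^ 2)⁻¹ * ∏ l ∈ Finset.Icc 1 j, (sqq u l)⁻¹)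
          else 0)
      + u (A + 1) * (∏ l ∈ Finset.Icc 1 n', (sqq u l)⁻¹) * ∏ l ∈ Finset.Icc (A + 1) n', (sqq u l)⁻¹
      = 0 := by
  have hsub : Finset.Ioo A n' ⊆ Finset.Ioo A B := by
    intro x hx; rw [Finset.mem_Ioo] at *; omega
  have hsum : (∑ j ∈ Finset.Ioo A B,
      if j + 1 ≤ n' then
        (-(u (A + 1) * u (j + 1)) * ∏ l ∈ Finset.Icc (A + 1) j, (sqq u l)⁻¹)
          * (-(u (j + 1)) * (1 + u (j + 1) ^ 2)⁻¹ * ∏ l ∈ Finset.Icc 1 j, (sqq u l)⁻¹)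
      else 0) = u (A + 1) * (ga u A (A + 1) - ga u A n') := by
    rw [← Finset.sum_subset hsub (fun x hx hnx => by
      rw [Finset.mem_Ioo] at hx
      rw [Finset.mem_Ioo] at hnx
      rw [if_neg (by omega)])]
    rw [show (∑ j ∈ Finset.Ioo A n',
        if j + 1 ≤ n' then
          (-(u (A + 1) * u (j + 1)) * ∏ l ∈ Finset.Icc (A + 1) j, (sqq u l)⁻¹)
            * (-(u (j + 1)) * (1 + u (j + 1) ^ 2)⁻¹ * ∏ l ∈ Finset.Icc 1 j, (sqq u l)⁻¹)
        else 0)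
        = ∑ j ∈ Finset.Ioo A n', u (A + 1) * (ga u A j - ga u A (j + 1))
      from Finset.sum_congr rfl fun j hj => by
        rw [Finset.mem_Ioo] at hj
        rw [if_pos (by omega), ga_diff u A j (by omega), inv_one_add_sq u (j + 1)]
        ring]
    rw [← Finset.mul_sum, ← Finset.Ico_add_one_left_eq_Ioo, tele (ga u A) hA]
  rw [hsum]
  have e1 : ga u A (A + 1)
      = (sqq u (A + 1))⁻¹ * ((∏ l ∈ Finset.Icc 1 A, (sqq u l)⁻¹) * (sqq u (A + 1))⁻¹) := by
    unfold ga
    rw [Finset.Icc_self, Finset.prod_singleton,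
      prod_split (fun l => (sqq u l)⁻¹) (show 1 ≤ A + 1 by omega) (show A ≤ A + 1 by omega),
      Finset.Icc_self, Finset.prod_singleton]
  have e2 : ga u A n'
      = (∏ l ∈ Finset.Icc (A + 1) n', (sqq u l)⁻¹) * ∏ l ∈ Finset.Icc 1 n', (sqq u l)⁻¹ := rfl
  rw [e1, e2, inv_one_add_sq u (A + 1)]
  ring

lemma keyYX1 (u : ℕ → ℝ) {A B : ℕ} (hAB : A < B) :
    -(u (A + 1) * u (B + 1)) * ∏ l ∈ Finset.Icc (A + 1) B, (sqq u l)⁻¹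
      + (∑ j ∈ Finset.Ioo A B,
          (u (A + 1) * u (j + 1) * (sqq u (A + 1))⁻¹ * ∏ l ∈ Finset.Icc (A + 2) j, sqq u l)
            * (-(u (j + 1) * u (B + 1)) * ∏ l ∈ Finset.Icc (j + 1) B, (sqq u l)⁻¹))
      + u (A + 1) * u (B + 1) * (sqq u (A + 1))⁻¹ * ∏ l ∈ Finset.Icc (A + 2) B, sqq u l = 0 := by
  have hsum : (∑ j ∈ Finset.Ioo A B,
      (u (A + 1) * u (j + 1) * (sqq u (A + 1))⁻¹ * ∏ l ∈ Finset.Icc (A + 2) j, sqq u l)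
        * (-(u (j + 1) * u (B + 1)) * ∏ l ∈ Finset.Icc (j + 1) B, (sqq u l)⁻¹))
      = u (A + 1) * u (B + 1) * (sqq u (A + 1))⁻¹ * (fc u A B (A + 1) - fc u A B B) := by
    rw [show (∑ j ∈ Finset.Ioo A B,
        (u (A + 1) * u (j + 1) * (sqq u (A + 1))⁻¹ * ∏ l ∈ Finset.Icc (A + 2) j, sqq u l)
          * (-(u (j + 1) * u (B + 1)) * ∏ l ∈ Finset.Icc (j + 1) B, (sqq u l)⁻¹))
        = ∑ j ∈ Finset.Ioo A B,
            u (A + 1) * u (B + 1) * (sqq u (A + 1))⁻¹ * (fc u A B j - fc u A B (j + 1))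
      from Finset.sum_congr rfl fun j hj => by
        rw [Finset.mem_Ioo] at hj
        rw [fc_diff u A B j (by omega) (by omega),
          prod_split (fun l => (sqq u l)⁻¹) (show j + 1 ≤ j + 1 + 1 by omega)
            (show j + 1 ≤ B by omega),
          Finset.Icc_self]
        simp only [Finset.prod_singleton]
        ring]
    rw [← Finset.mul_sum, ← Finset.Ico_add_one_left_eq_Ioo, tele (fc u A B) (m := A + 1) hAB]
  rw [hsum]
  have e1 : fc u A B (A + 1) = ∏ l ∈ Finset.Icc (A + 2) B, (sqq u l)⁻¹ := by
    unfold fc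
    rw [Finset.Icc_eq_empty (show ¬(A + 2 ≤ A + 1) by omega), Finset.prod_empty, one_mul,
      show A + 1 + 1 = A + 2 from rfl]
  have e2 : fc u A B B = ∏ l ∈ Finset.Icc (A + 2) B, sqq u l := by
    unfold fc; rw [Finset.Icc_eq_empty (show ¬(B + 1 ≤ B) by omega), Finset.prod_empty, mul_one]
  rw [e1, e2,
    prod_split (fun l => (sqq u l)⁻¹) (show A + 1 ≤ A + 1 + 1 by omega) (show A + 1 ≤ B by omega),
    Finset.Icc_self]
  simp only [Finset.prod_singleton]
  ring

lemma keyYX2 (u : ℕ → ℝ) {A B n' : ℕ} (hA : A + 1 ≤ n') (hB : n' ≤ B) :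
    u (A + 1) * (∏ l ∈ Finset.Icc 1 n', (sqq u l)⁻¹) * ∏ l ∈ Finset.Icc (A + 1) n', (sqq u l)⁻¹
      + (∑ j ∈ Finset.Ioo A B,
          if j + 1 ≤ n' then
            (u (A + 1) * u (j + 1) * (sqq u (A + 1))⁻¹ * ∏ l ∈ Finset.Icc (A + 2) j, sqq u l)
              * (u (j + 1) * (∏ l ∈ Finset.Icc 1 n', (sqq u l)⁻¹)
                  * ∏ l ∈ Finset.Icc (j + 1) n', (sqq u l)⁻¹)
          else 0)
      + -(u (A + 1)) * (1 + u (A + 1) ^ 2)⁻¹ * ∏ l ∈ Finset.Icc 1 A, (sqq u l)⁻¹ = 0 := by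
  have hsub : Finset.Ioo A n' ⊆ Finset.Ioo A B := by
    intro x hx; rw [Finset.mem_Ioo] at *; omega
  have hsum : (∑ j ∈ Finset.Ioo A B,
      if j + 1 ≤ n' then
        (u (A + 1) * u (j + 1) * (sqq u (A + 1))⁻¹ * ∏ l ∈ Finset.Icc (A + 2) j, sqq u l)
          * (u (j + 1) * (∏ l ∈ Finset.Icc 1 n', (sqq u l)⁻¹)
              * ∏ l ∈ Finset.Icc (j + 1) n', (sqq u l)⁻¹)
      else 0)
      = -(u (A + 1) * (sqq u (A + 1))⁻¹ * ∏ l ∈ Finset.Icc 1 n', (sqq u l)⁻¹)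
          * (fc u A n' (A + 1) - fc u A n' n') := by
    rw [← Finset.sum_subset hsub (fun x hx hnx => by
      rw [Finset.mem_Ioo] at hx
      rw [Finset.mem_Ioo] at hnx
      rw [if_neg (by omega)])]
    rw [show (∑ j ∈ Finset.Ioo A n',
        if j + 1 ≤ n' then
          (u (A + 1) * u (j + 1) * (sqq u (A + 1))⁻¹ * ∏ l ∈ Finset.Icc (A + 2) j, sqq u l)
            * (u (j + 1) * (∏ l ∈ Finset.Icc 1 n', (sqq u l)⁻¹)
                * ∏ l ∈ Finset.Icc (j + 1) n', (sqq u l)⁻¹)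
        else 0)
        = ∑ j ∈ Finset.Ioo A n',
            -(u (A + 1) * (sqq u (A + 1))⁻¹ * ∏ l ∈ Finset.Icc 1 n', (sqq u l)⁻¹)
              * (fc u A n' j - fc u A n' (j + 1))
      from Finset.sum_congr rfl fun j hj => by
        rw [Finset.mem_Ioo] at hj
        rw [if_pos (by omega), fc_diff u A n' j (by omega) (by omega),
          prod_split (fun l => (sqq u l)⁻¹) (show j + 1 ≤ j + 1 + 1 by omega)
            (show j + 1 ≤ n' by omega),
          Finset.Icc_self]
        simp only [Finset.prod_singleton]
        ring]
    rw [← Finset.mul_sum, ← Finset.Ico_add_one_left_eq_Ioo, tele (fc u A n') hA]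
  rw [hsum]
  have e1 : fc u A n' (A + 1) = ∏ l ∈ Finset.Icc (A + 2) n', (sqq u l)⁻¹ := by
    unfold fc
    rw [Finset.Icc_eq_empty (show ¬(A + 2 ≤ A + 1) by omega), Finset.prod_empty, one_mul,
      show A + 1 + 1 = A + 2 from rfl]
  have e2 : fc u A n' n' = ∏ l ∈ Finset.Icc (A + 2) n', sqq u l := by
    unfold fc; rw [Finset.Icc_eq_empty (show ¬(n' + 1 ≤ n') by omega), Finset.prod_empty, mul_one]
  have hMN : (∏ l ∈ Finset.Icc (A + 2) n', (sqq u l)⁻¹) * ∏ l ∈ Finset.Icc (A + 2) n', sqq u l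
      = 1 := by
    rw [← Finset.prod_mul_distrib]
    exact Finset.prod_eq_one fun l _ => inv_mul_cancel₀ (sqq_ne u l)
  rw [e1, e2, inv_one_add_sq u (A + 1),
    prod_split (fun l => (sqq u l)⁻¹) (show 1 ≤ A + 1 + 1 by omega) (show A + 1 ≤ n' from hA),
    prod_split (fun l => (sqq u l)⁻¹) (show 1 ≤ A + 1 by omega) (show A ≤ A + 1 by omega),
    Finset.Icc_self, Finset.prod_singleton,
    prod_split (fun l => (sqq u l)⁻¹) (show A + 1 ≤ A + 1 + 1 by omega) (show A + 1 ≤ n' from hA),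
    Finset.Icc_self]
  simp only [Finset.prod_singleton]
  linear_combination (u (A + 1) * (sqq u (A + 1))⁻¹ * (sqq u (A + 1))⁻¹
    * ∏ l ∈ Finset.Icc 1 A, (sqq u l)⁻¹) * hMN


lemma sum_Ioo_map {n : ℕ} (a b : Fin n) (G : ℕ → ℝ) :
    ∑ j ∈ Finset.Ioo a b, G (j : ℕ) = ∑ j ∈ Finset.Ioo (a : ℕ) (b : ℕ), G j := by
  rw [← Fin.map_valEmbedding_Ioo, Finset.sum_map]
  rfl

lemma sum_three {n : ℕ} (g : Fin n → ℝ) {a b : Fin n} (hab : a < b)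
    (h0 : ∀ j, j < a ∨ b < j → g j = 0) :
    ∑ j, g j = g a + (∑ j ∈ Finset.Ioo a b, g j) + g b := by
  have hne : a ≠ b := ne_of_lt hab
  have h1 : ∑ j, g j = ∑ j ∈ insert a (insert b (Finset.Ioo a b)), g j := by
    refine (Finset.sum_subset (Finset.subset_univ _) ?_).symm
    intro x _ hx
    simp only [Finset.mem_insert, Finset.mem_Ioo, not_or, not_and] at hx
    obtain ⟨hxa, hxb, hxio⟩ := hx
    refine h0 x ?_
    rcases lt_trichotomy x a with h | h | h
    · exact Or.inl h
    · exact absurd h hxa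
    · rcases lt_trichotomy x b with h' | h' | h'
      · exact absurd h' (hxio h)
      · exact absurd h' hxb
      · exact Or.inr h'
  rw [h1, Finset.sum_insert (by simp [hne]), Finset.sum_insert (by simp)]
  ring



/-- The upper-triangular unipotent matrix `x†`: ones on the diagonal,
`x†_{i,j} = −u_i u_j ∏_{l=i}^{j−1}(1+u_l²)^{−1/2}` for `1 ≤ i < j ≤ n'`,
`x†_{i,n} = u_i ∏_{j=1}^{n'}(1+u_j²)^{−1/2} ∏_{j=i}^{n'}(1+u_j²)^{−1/2}` for
`1 ≤ i ≤ n'`, and all other off-diagonal entries zero (1-based indices;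
`u : ℕ → ℝ` is used with 1-based indices `u 1, …, u n'`). -/
noncomputable def xdagger (n n' : ℕ) (u : ℕ → ℝ) : Matrix (Fin n) (Fin n) ℝ :=
  Matrix.of fun a b =>
    if a = b then 1
    else if (a : ℕ) < (b : ℕ) ∧ (b : ℕ) + 1 ≤ n' then
      -(u ((a : ℕ) + 1) * u ((b : ℕ) + 1))
        * ∏ l ∈ Finset.Icc ((a : ℕ) + 1) (b : ℕ), (Real.sqrt (1 + u l ^ 2))⁻¹
    else if (b : ℕ) + 1 = n ∧ (a : ℕ) + 1 ≤ n' then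
      u ((a : ℕ) + 1) * (∏ j ∈ Finset.Icc 1 n', (Real.sqrt (1 + u j ^ 2))⁻¹)
        * ∏ j ∈ Finset.Icc ((a : ℕ) + 1) n', (Real.sqrt (1 + u j ^ 2))⁻¹
    else 0

/-- The claimed inverse of `x†`: ones on the diagonal,
`(x†⁻¹)_{i,j} = u_i u_j (1+u_i²)^{−1/2} ∏_{l=i+1}^{j−1}(1+u_l²)^{1/2}` for
`1 ≤ i < j ≤ n'`, `(x†⁻¹)_{i,n} = −u_i (1+u_i²)^{−1} ∏_{j=1}^{i−1}(1+u_j²)^{−1/2}`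
for `1 ≤ i ≤ n'`, and all other off-diagonal entries zero (1-based indices). -/
noncomputable def xdaggerInv (n n' : ℕ) (u : ℕ → ℝ) : Matrix (Fin n) (Fin n) ℝ :=
  Matrix.of fun a b =>
    if a = b then 1
    else if (a : ℕ) < (b : ℕ) ∧ (b : ℕ) + 1 ≤ n' then
      u ((a : ℕ) + 1) * u ((b : ℕ) + 1) * (Real.sqrt (1 + u ((a : ℕ) + 1) ^ 2))⁻¹
        * ∏ l ∈ Finset.Icc ((a : ℕ) + 2) (b : ℕ), Real.sqrt (1 + u l ^ 2)
    else if (b : ℕ) + 1 = n ∧ (a : ℕ) + 1 ≤ n' then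
      -(u ((a : ℕ) + 1)) * (1 + u ((a : ℕ) + 1) ^ 2)⁻¹
        * ∏ j ∈ Finset.Icc 1 (a : ℕ), (Real.sqrt (1 + u j ^ 2))⁻¹
    else 0


theorem stmt_5 (n n' : ℕ) (h1 : 1 ≤ n') (h2 : n' < n) (u : ℕ → ℝ) :
    xdagger n n' u * xdaggerInv n n' u = 1
    ∧ xdaggerInv n n' u * xdagger n n' u = 1 := by
  have hXdiag : ∀ a : Fin n, xdagger n n' u a a = 1 := fun a => by simp [xdagger]
  have hYdiag : ∀ a : Fin n, xdaggerInv n n' u a a = 1 := fun a => by simp [xdaggerInv]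
  have hXlt : ∀ a j : Fin n, j < a → xdagger n n' u a j = 0 := by
    intro a j h
    have hv : (j : ℕ) < (a : ℕ) := Fin.lt_def.mp h
    have ha : (a : ℕ) < n := a.isLt
    simp only [xdagger, Matrix.of_apply]
    rw [if_neg (by rintro rfl; omega), if_neg (by rintro ⟨hc, -⟩; omega),
      if_neg (by rintro ⟨hc, -⟩; omega)]
  have hYlt : ∀ a j : Fin n, j < a → xdaggerInv n n' u a j = 0 := by
    intro a j h
    have hv : (j : ℕ) < (a : ℕ) := Fin.lt_def.mp h
    have ha : (a : ℕ) < n := a.isLt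
    simp only [xdaggerInv, Matrix.of_apply]
    rw [if_neg (by rintro rfl; omega), if_neg (by rintro ⟨hc, -⟩; omega),
      if_neg (by rintro ⟨hc, -⟩; omega)]
  constructor
  · ext a b
    rw [Matrix.mul_apply, Matrix.one_apply]
    rcases lt_trichotomy a b with hab | heq | hba
    · rw [if_neg (Fin.ne_of_lt hab)]
      have hvab : (a : ℕ) < (b : ℕ) := Fin.lt_def.mp hab
      have hb : (b : ℕ) < n := b.isLt
      have hsplit : (∑ j, xdagger n n' u a j * xdaggerInv n n' u j b)
          = xdagger n n' u a a * xdaggerInv n n' u a b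
            + (∑ j ∈ Finset.Ioo a b, xdagger n n' u a j * xdaggerInv n n' u j b)
            + xdagger n n' u a b * xdaggerInv n n' u b b := by
        refine sum_three _ hab fun j hj => ?_
        rcases hj with h | h
        · rw [hXlt a j h, zero_mul]
        · rw [hYlt j b h, mul_zero]
      rw [hsplit, hXdiag a, one_mul, hYdiag b, mul_one]
      by_cases hb' : (b : ℕ) + 1 ≤ n'
      · have hYab : xdaggerInv n n' u a b
            = u ((a : ℕ) + 1) * u ((b : ℕ) + 1) * (sqq u ((a : ℕ) + 1))⁻¹
                * ∏ l ∈ Finset.Icc ((a : ℕ) + 2) (b : ℕ), sqq u l := by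
          simp only [xdaggerInv, Matrix.of_apply, sqq]
          rw [if_neg (Fin.ne_of_lt hab), if_pos ⟨hvab, hb'⟩]
        have hXab : xdagger n n' u a b
            = -(u ((a : ℕ) + 1) * u ((b : ℕ) + 1))
                * ∏ l ∈ Finset.Icc ((a : ℕ) + 1) (b : ℕ), (sqq u l)⁻¹ := by
          simp only [xdagger, Matrix.of_apply, sqq]
          rw [if_neg (Fin.ne_of_lt hab), if_pos ⟨hvab, hb'⟩]
        have hmid : (∑ j ∈ Finset.Ioo a b, xdagger n n' u a j * xdaggerInv n n' u j b)
            = ∑ j ∈ Finset.Ioo (a : ℕ) (b : ℕ),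
                (-(u ((a : ℕ) + 1) * u (j + 1)) * ∏ l ∈ Finset.Icc ((a : ℕ) + 1) j, (sqq u l)⁻¹)
                  * (u (j + 1) * u ((b : ℕ) + 1) * (sqq u (j + 1))⁻¹
                      * ∏ l ∈ Finset.Icc (j + 2) (b : ℕ), sqq u l) := by
          rw [← sum_Ioo_map a b (fun m =>
            (-(u ((a : ℕ) + 1) * u (m + 1)) * ∏ l ∈ Finset.Icc ((a : ℕ) + 1) m, (sqq u l)⁻¹)
              * (u (m + 1) * u ((b : ℕ) + 1) * (sqq u (m + 1))⁻¹
                  * ∏ l ∈ Finset.Icc (m + 2) (b : ℕ), sqq u l))]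
          refine Finset.sum_congr rfl fun j hj => ?_
          rw [Finset.mem_Ioo] at hj
          have hj1 : (a : ℕ) < (j : ℕ) := Fin.lt_def.mp hj.1
          have hj2 : (j : ℕ) < (b : ℕ) := Fin.lt_def.mp hj.2
          simp only [xdagger, xdaggerInv, Matrix.of_apply, sqq]
          rw [if_neg (Fin.ne_of_lt hj.1), if_pos ⟨hj1, by omega⟩,
            if_neg (Fin.ne_of_lt hj.2), if_pos ⟨hj2, hb'⟩]
        rw [hYab, hXab, hmid]
        exact keyXY1 u hvab
      · by_cases hbn : (b : ℕ) + 1 = n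
        · by_cases ha' : (a : ℕ) + 1 ≤ n'
          · have hYab : xdaggerInv n n' u a b
                = -(u ((a : ℕ) + 1)) * (1 + u ((a : ℕ) + 1) ^ 2)⁻¹
                    * ∏ l ∈ Finset.Icc 1 (a : ℕ), (sqq u l)⁻¹ := by
              simp only [xdaggerInv, Matrix.of_apply, sqq]
              rw [if_neg (Fin.ne_of_lt hab), if_neg (by rintro ⟨-, hc⟩; exact hb' hc),
                if_pos ⟨hbn, ha'⟩]
            have hXab : xdagger n n' u a b
                = u ((a : ℕ) + 1) * (∏ l ∈ Finset.Icc 1 n', (sqq u l)⁻¹)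
                    * ∏ l ∈ Finset.Icc ((a : ℕ) + 1) n', (sqq u l)⁻¹ := by
              simp only [xdagger, Matrix.of_apply, sqq]
              rw [if_neg (Fin.ne_of_lt hab), if_neg (by rintro ⟨-, hc⟩; exact hb' hc),
                if_pos ⟨hbn, ha'⟩]
            have hmid : (∑ j ∈ Finset.Ioo a b, xdagger n n' u a j * xdaggerInv n n' u j b)
                = ∑ j ∈ Finset.Ioo (a : ℕ) (b : ℕ),
                    if j + 1 ≤ n' then
                      (-(u ((a : ℕ) + 1) * u (j + 1))
                          * ∏ l ∈ Finset.Icc ((a : ℕ) + 1) j, (sqq u l)⁻¹)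
                        * (-(u (j + 1)) * (1 + u (j + 1) ^ 2)⁻¹
                            * ∏ l ∈ Finset.Icc 1 j, (sqq u l)⁻¹)
                    else 0 := by
              rw [← sum_Ioo_map a b (fun m =>
                if m + 1 ≤ n' then
                  (-(u ((a : ℕ) + 1) * u (m + 1))
                      * ∏ l ∈ Finset.Icc ((a : ℕ) + 1) m, (sqq u l)⁻¹)
                    * (-(u (m + 1)) * (1 + u (m + 1) ^ 2)⁻¹
                        * ∏ l ∈ Finset.Icc 1 m, (sqq u l)⁻¹)
                else 0)]
              refine Finset.sum_congr rfl fun j hj => ?_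
              rw [Finset.mem_Ioo] at hj
              have hj1 : (a : ℕ) < (j : ℕ) := Fin.lt_def.mp hj.1
              have hj2 : (j : ℕ) < (b : ℕ) := Fin.lt_def.mp hj.2
              by_cases hj' : (j : ℕ) + 1 ≤ n'
              · rw [if_pos hj']
                simp only [xdagger, xdaggerInv, Matrix.of_apply, sqq]
                rw [if_neg (Fin.ne_of_lt hj.1), if_pos ⟨hj1, hj'⟩,
                  if_neg (Fin.ne_of_lt hj.2), if_neg (by rintro ⟨-, hc⟩; exact hb' hc),
                  if_pos ⟨hbn, hj'⟩]
              · rw [if_neg hj']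
                have hX0 : xdagger n n' u a j = 0 := by
                  simp only [xdagger, Matrix.of_apply]
                  rw [if_neg (Fin.ne_of_lt hj.1), if_neg (by rintro ⟨-, hc⟩; exact hj' hc),
                    if_neg (by rintro ⟨hc, -⟩; omega)]
                rw [hX0, zero_mul]
            rw [hYab, hXab, hmid]
            exact keyXY2 u ha' (by omega)
          · have hYab : xdaggerInv n n' u a b = 0 := by
              simp only [xdaggerInv, Matrix.of_apply]
              rw [if_neg (Fin.ne_of_lt hab), if_neg (by rintro ⟨-, hc⟩; exact hb' hc),
                if_neg (by rintro ⟨-, hc⟩; exact ha' hc)]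
            have hXab : xdagger n n' u a b = 0 := by
              simp only [xdagger, Matrix.of_apply]
              rw [if_neg (Fin.ne_of_lt hab), if_neg (by rintro ⟨-, hc⟩; exact hb' hc),
                if_neg (by rintro ⟨-, hc⟩; exact ha' hc)]
            have hmid : (∑ j ∈ Finset.Ioo a b, xdagger n n' u a j * xdaggerInv n n' u j b)
                = 0 := Finset.sum_eq_zero fun j hj => by
              rw [Finset.mem_Ioo] at hj
              have hj1 : (a : ℕ) < (j : ℕ) := Fin.lt_def.mp hj.1
              have hj2 : (j : ℕ) < (b : ℕ) := Fin.lt_def.mp hj.2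
              have hX0 : xdagger n n' u a j = 0 := by
                simp only [xdagger, Matrix.of_apply]
                rw [if_neg (Fin.ne_of_lt hj.1), if_neg (by rintro ⟨-, hc⟩; omega),
                  if_neg (by rintro ⟨hc, -⟩; omega)]
              rw [hX0, zero_mul]
            rw [hYab, hXab, hmid]
            norm_num
        · have hYab : xdaggerInv n n' u a b = 0 := by
            simp only [xdaggerInv, Matrix.of_apply]
            rw [if_neg (Fin.ne_of_lt hab), if_neg (by rintro ⟨-, hc⟩; exact hb' hc),
              if_neg (by rintro ⟨hc, -⟩; exact hbn hc)]
          have hXab : xdagger n n' u a b = 0 := by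
            simp only [xdagger, Matrix.of_apply]
            rw [if_neg (Fin.ne_of_lt hab), if_neg (by rintro ⟨-, hc⟩; exact hb' hc),
              if_neg (by rintro ⟨hc, -⟩; exact hbn hc)]
          have hmid : (∑ j ∈ Finset.Ioo a b, xdagger n n' u a j * xdaggerInv n n' u j b)
              = 0 := Finset.sum_eq_zero fun j hj => by
            rw [Finset.mem_Ioo] at hj
            have hY0 : xdaggerInv n n' u j b = 0 := by
              simp only [xdaggerInv, Matrix.of_apply]
              rw [if_neg (Fin.ne_of_lt hj.2), if_neg (by rintro ⟨-, hc⟩; exact hb' hc),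
                if_neg (by rintro ⟨hc, -⟩; exact hbn hc)]
            rw [hY0, mul_zero]
          rw [hYab, hXab, hmid]
          norm_num
    · subst heq
      rw [if_pos rfl]
      rw [Finset.sum_eq_single a (fun j _ hne => by
          rcases lt_or_gt_of_ne hne with h | h
          · rw [hXlt a j h, zero_mul]
          · rw [hYlt j a h, mul_zero])
        (fun h => absurd (Finset.mem_univ a) h)]
      rw [hXdiag a, hYdiag a]
      norm_num
    · rw [if_neg (Fin.ne_of_gt hba)]
      refine Finset.sum_eq_zero fun j _ => ?_
      rcases le_or_gt j b with h | h
      · rw [hXlt a j (lt_of_le_of_lt h hba), zero_mul]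
      · rw [hYlt j b h, mul_zero]
  · ext a b
    rw [Matrix.mul_apply, Matrix.one_apply]
    rcases lt_trichotomy a b with hab | heq | hba
    · rw [if_neg (Fin.ne_of_lt hab)]
      have hvab : (a : ℕ) < (b : ℕ) := Fin.lt_def.mp hab
      have hb : (b : ℕ) < n := b.isLt
      have hsplit : (∑ j, xdaggerInv n n' u a j * xdagger n n' u j b)
          = xdaggerInv n n' u a a * xdagger n n' u a b
            + (∑ j ∈ Finset.Ioo a b, xdaggerInv n n' u a j * xdagger n n' u j b)
            + xdaggerInv n n' u a b * xdagger n n' u b b := by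
        refine sum_three _ hab fun j hj => ?_
        rcases hj with h | h
        · rw [hYlt a j h, zero_mul]
        · rw [hXlt j b h, mul_zero]
      rw [hsplit, hYdiag a, one_mul, hXdiag b, mul_one]
      by_cases hb' : (b : ℕ) + 1 ≤ n'
      · have hXab : xdagger n n' u a b
            = -(u ((a : ℕ) + 1) * u ((b : ℕ) + 1))
                * ∏ l ∈ Finset.Icc ((a : ℕ) + 1) (b : ℕ), (sqq u l)⁻¹ := by
          simp only [xdagger, Matrix.of_apply, sqq]
          rw [if_neg (Fin.ne_of_lt hab), if_pos ⟨hvab, hb'⟩]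
        have hYab : xdaggerInv n n' u a b
            = u ((a : ℕ) + 1) * u ((b : ℕ) + 1) * (sqq u ((a : ℕ) + 1))⁻¹
                * ∏ l ∈ Finset.Icc ((a : ℕ) + 2) (b : ℕ), sqq u l := by
          simp only [xdaggerInv, Matrix.of_apply, sqq]
          rw [if_neg (Fin.ne_of_lt hab), if_pos ⟨hvab, hb'⟩]
        have hmid : (∑ j ∈ Finset.Ioo a b, xdaggerInv n n' u a j * xdagger n n' u j b)
            = ∑ j ∈ Finset.Ioo (a : ℕ) (b : ℕ),
                (u ((a : ℕ) + 1) * u (j + 1) * (sqq u ((a : ℕ) + 1))⁻¹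
                    * ∏ l ∈ Finset.Icc ((a : ℕ) + 2) j, sqq u l)
                  * (-(u (j + 1) * u ((b : ℕ) + 1))
                      * ∏ l ∈ Finset.Icc (j + 1) (b : ℕ), (sqq u l)⁻¹) := by
          rw [← sum_Ioo_map a b (fun m =>
            (u ((a : ℕ) + 1) * u (m + 1) * (sqq u ((a : ℕ) + 1))⁻¹
                * ∏ l ∈ Finset.Icc ((a : ℕ) + 2) m, sqq u l)
              * (-(u (m + 1) * u ((b : ℕ) + 1))
                  * ∏ l ∈ Finset.Icc (m + 1) (b : ℕ), (sqq u l)⁻¹))]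
          refine Finset.sum_congr rfl fun j hj => ?_
          rw [Finset.mem_Ioo] at hj
          have hj1 : (a : ℕ) < (j : ℕ) := Fin.lt_def.mp hj.1
          have hj2 : (j : ℕ) < (b : ℕ) := Fin.lt_def.mp hj.2
          simp only [xdagger, xdaggerInv, Matrix.of_apply, sqq]
          rw [if_neg (Fin.ne_of_lt hj.1), if_pos ⟨hj1, by omega⟩,
            if_neg (Fin.ne_of_lt hj.2), if_pos ⟨hj2, hb'⟩]
        rw [hXab, hYab, hmid]
        exact keyYX1 u hvab
      · by_cases hbn : (b : ℕ) + 1 = n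
        · by_cases ha' : (a : ℕ) + 1 ≤ n'
          · have hXab : xdagger n n' u a b
                = u ((a : ℕ) + 1) * (∏ l ∈ Finset.Icc 1 n', (sqq u l)⁻¹)
                    * ∏ l ∈ Finset.Icc ((a : ℕ) + 1) n', (sqq u l)⁻¹ := by
              simp only [xdagger, Matrix.of_apply, sqq]
              rw [if_neg (Fin.ne_of_lt hab), if_neg (by rintro ⟨-, hc⟩; exact hb' hc),
                if_pos ⟨hbn, ha'⟩]
            have hYab : xdaggerInv n n' u a b
                = -(u ((a : ℕ) + 1)) * (1 + u ((a : ℕ) + 1) ^ 2)⁻¹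
                    * ∏ l ∈ Finset.Icc 1 (a : ℕ), (sqq u l)⁻¹ := by
              simp only [xdaggerInv, Matrix.of_apply, sqq]
              rw [if_neg (Fin.ne_of_lt hab), if_neg (by rintro ⟨-, hc⟩; exact hb' hc),
                if_pos ⟨hbn, ha'⟩]
            have hmid : (∑ j ∈ Finset.Ioo a b, xdaggerInv n n' u a j * xdagger n n' u j b)
                = ∑ j ∈ Finset.Ioo (a : ℕ) (b : ℕ),
                    if j + 1 ≤ n' then
                      (u ((a : ℕ) + 1) * u (j + 1) * (sqq u ((a : ℕ) + 1))⁻¹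
                          * ∏ l ∈ Finset.Icc ((a : ℕ) + 2) j, sqq u l)
                        * (u (j + 1) * (∏ l ∈ Finset.Icc 1 n', (sqq u l)⁻¹)
                            * ∏ l ∈ Finset.Icc (j + 1) n', (sqq u l)⁻¹)
                    else 0 := by
              rw [← sum_Ioo_map a b (fun m =>
                if m + 1 ≤ n' then
                  (u ((a : ℕ) + 1) * u (m + 1) * (sqq u ((a : ℕ) + 1))⁻¹
                      * ∏ l ∈ Finset.Icc ((a : ℕ) + 2) m, sqq u l)
                    * (u (m + 1) * (∏ l ∈ Finset.Icc 1 n', (sqq u l)⁻¹)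
                        * ∏ l ∈ Finset.Icc (m + 1) n', (sqq u l)⁻¹)
                else 0)]
              refine Finset.sum_congr rfl fun j hj => ?_
              rw [Finset.mem_Ioo] at hj
              have hj1 : (a : ℕ) < (j : ℕ) := Fin.lt_def.mp hj.1
              have hj2 : (j : ℕ) < (b : ℕ) := Fin.lt_def.mp hj.2
              by_cases hj' : (j : ℕ) + 1 ≤ n'
              · rw [if_pos hj']
                simp only [xdagger, xdaggerInv, Matrix.of_apply, sqq]
                rw [if_neg (Fin.ne_of_lt hj.1), if_pos ⟨hj1, hj'⟩,
                  if_neg (Fin.ne_of_lt hj.2), if_neg (by rintro ⟨-, hc⟩; exact hb' hc),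
                  if_pos ⟨hbn, hj'⟩]
              · rw [if_neg hj']
                have hY0 : xdaggerInv n n' u a j = 0 := by
                  simp only [xdaggerInv, Matrix.of_apply]
                  rw [if_neg (Fin.ne_of_lt hj.1), if_neg (by rintro ⟨-, hc⟩; exact hj' hc),
                    if_neg (by rintro ⟨hc, -⟩; omega)]
                rw [hY0, zero_mul]
            rw [hXab, hYab, hmid]
            exact keyYX2 u ha' (by omega)
          · have hXab : xdagger n n' u a b = 0 := by
              simp only [xdagger, Matrix.of_apply]
              rw [if_neg (Fin.ne_of_lt hab), if_neg (by rintro ⟨-, hc⟩; exact hb' hc),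
                if_neg (by rintro ⟨-, hc⟩; exact ha' hc)]
            have hYab : xdaggerInv n n' u a b = 0 := by
              simp only [xdaggerInv, Matrix.of_apply]
              rw [if_neg (Fin.ne_of_lt hab), if_neg (by rintro ⟨-, hc⟩; exact hb' hc),
                if_neg (by rintro ⟨-, hc⟩; exact ha' hc)]
            have hmid : (∑ j ∈ Finset.Ioo a b, xdaggerInv n n' u a j * xdagger n n' u j b)
                = 0 := Finset.sum_eq_zero fun j hj => by
              rw [Finset.mem_Ioo] at hj
              have hj1 : (a : ℕ) < (j : ℕ) := Fin.lt_def.mp hj.1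
              have hj2 : (j : ℕ) < (b : ℕ) := Fin.lt_def.mp hj.2
              have hY0 : xdaggerInv n n' u a j = 0 := by
                simp only [xdaggerInv, Matrix.of_apply]
                rw [if_neg (Fin.ne_of_lt hj.1), if_neg (by rintro ⟨-, hc⟩; omega),
                  if_neg (by rintro ⟨hc, -⟩; omega)]
              rw [hY0, zero_mul]
            rw [hXab, hYab, hmid]
            norm_num
        · have hXab : xdagger n n' u a b = 0 := by
            simp only [xdagger, Matrix.of_apply]
            rw [if_neg (Fin.ne_of_lt hab), if_neg (by rintro ⟨-, hc⟩; exact hb' hc),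
              if_neg (by rintro ⟨hc, -⟩; exact hbn hc)]
          have hYab : xdaggerInv n n' u a b = 0 := by
            simp only [xdaggerInv, Matrix.of_apply]
            rw [if_neg (Fin.ne_of_lt hab), if_neg (by rintro ⟨-, hc⟩; exact hb' hc),
              if_neg (by rintro ⟨hc, -⟩; exact hbn hc)]
          have hmid : (∑ j ∈ Finset.Ioo a b, xdaggerInv n n' u a j * xdagger n n' u j b)
              = 0 := Finset.sum_eq_zero fun j hj => by
            rw [Finset.mem_Ioo] at hj
            have hX0 : xdagger n n' u j b = 0 := by
              simp only [xdagger, Matrix.of_apply]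
              rw [if_neg (Fin.ne_of_lt hj.2), if_neg (by rintro ⟨-, hc⟩; exact hb' hc),
                if_neg (by rintro ⟨hc, -⟩; exact hbn hc)]
            rw [hX0, mul_zero]
          rw [hXab, hYab, hmid]
          norm_num
    · subst heq
      rw [if_pos rfl]
      rw [Finset.sum_eq_single a (fun j _ hne => by
          rcases lt_or_gt_of_ne hne with h | h
          · rw [hYlt a j h, zero_mul]
          · rw [hXlt j a h, mul_zero])
        (fun h => absurd (Finset.mem_univ a) h)]
      rw [hYdiag a, hXdiag a]
      norm_num
    · rw [if_neg (Fin.ne_of_gt hba)]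
      refine Finset.sum_eq_zero fun j _ => ?_
      rcases le_or_gt j b with h | h
      · rw [hYlt a j (lt_of_le_of_lt h hba), zero_mul]
      · rw [hXlt j b h, mul_zero]
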